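/- Let X and Y be metric spaces, let f : X → Y be a mapping, let ω : X → ℝ and ω̃ : Y → ℝ be strictly positive functions, and let Ψ : X × X → ℝ be a nonnegative function such that Ψ(x,x) = ω̃(f(x))/ω(x) for every x ∈ X and liminf_{y → x, y ≠ x} Ψ(x,y) ≥ Ψ(x,x) for every x ∈ X. Then, as elements of [0,∞], ⨆_{x ∈ X} ( ω̃(f(x))/ω(x) ) · d*_f(x) ≤ ⨆_{x, y ∈ X, x ≠ y} Ψ(x,y) · dist(f(x), f(y)) / dist(x, y). -/
import Mathlib

open Filter Topology

/-- `d*_f(x)`: the limsup, in `[0,∞]`, of `dist (f x) (f y) / dist x y` as `y → x`,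
`y ≠ x` (equal to `0` at isolated points). -/
noncomputable def upperScalingNumber {X Y : Type*} [MetricSpace X] [MetricSpace Y]
    (f : X → Y) (x : X) : ENNReal :=
  Filter.limsup (fun y => ENNReal.ofReal (dist (f x) (f y) / dist x y)) (𝓝[≠] x)

/-- The Bloch number is dominated by the Lipschitz number: for any admissible-type
function `Ψ` (symmetry and the fourth condition are not needed for this direction). -/
theorem blochNumber_le_lipschitzNumber
    {X Y : Type*} [MetricSpace X] [MetricSpace Y]
    (f : X → Y) (ω : X → ℝ) (ω' : Y → ℝ)
    (hω : ∀ x, 0 < ω x) (hω' : ∀ y, 0 < ω' y)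
    (Ψ : X × X → ℝ) (hΨ0 : ∀ x y : X, 0 ≤ Ψ (x, y))
    (hΨdiag : ∀ x : X, Ψ (x, x) = ω' (f x) / ω x)
    (hΨliminf : ∀ x : X,
      ENNReal.ofReal (Ψ (x, x)) ≤
        Filter.liminf (fun y => ENNReal.ofReal (Ψ (x, y))) (𝓝[≠] x)) :
    (⨆ x : X, ENNReal.ofReal (ω' (f x) / ω x) * upperScalingNumber f x)
      ≤ ⨆ x : X, ⨆ y : X, ⨆ _ : x ≠ y,
          ENNReal.ofReal (Ψ (x, y)) *
            (ENNReal.ofReal (dist (f x) (f y)) / ENNReal.ofReal (dist x y)) := by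
  refine iSup_le fun x => ?_
  set u : X → ENNReal := fun y => ENNReal.ofReal (dist (f x) (f y) / dist x y) with hu
  set v : X → ENNReal := fun y => ENNReal.ofReal (Ψ (x, y)) with hv
  have step1 : ENNReal.ofReal (ω' (f x) / ω x) * upperScalingNumber f x ≤
      Filter.limsup (u * v) (𝓝[≠] x) := by
    calc ENNReal.ofReal (ω' (f x) / ω x) * upperScalingNumber f x
        = Filter.limsup u (𝓝[≠] x) * ENNReal.ofReal (Ψ (x, x)) := by
          rw [hΨdiag, mul_comm]; rfl
      _ ≤ Filter.limsup u (𝓝[≠] x) * Filter.liminf v (𝓝[≠] x) :=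
          mul_le_mul_right (hΨliminf x) _
      _ ≤ Filter.limsup (u * v) (𝓝[≠] x) := ENNReal.le_limsup_mul
  refine step1.trans (Filter.limsup_le_of_le (by isBoundedDefault) ?_)
  filter_upwards [self_mem_nhdsWithin] with y (hy : y ≠ x)
  have hxy : x ≠ y := hy.symm
  have hd : 0 < dist x y := dist_pos.mpr hxy
  have : (u * v) y = ENNReal.ofReal (Ψ (x, y)) *
      (ENNReal.ofReal (dist (f x) (f y)) / ENNReal.ofReal (dist x y)) := by
    simp only [Pi.mul_apply, hu, hv, ENNReal.ofReal_div_of_pos hd, mul_comm]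
  rw [this]
  exact le_iSup_of_le x (le_iSup_of_le y (le_iSup_of_le hxy le_rfl))
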